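/- Let M be a non-empty subset of the real symmetric n×n matrices. Then the following are equivalent: (i) the only positive semidefinite matrix in the real linear span of M is 0; (ii) there exists a positive definite matrix Q such that tr(QᵀFQ) = 0 for every F in M; (iii) there exists an invertible matrix T such that tr(TᵀFT) = 0 for every F in M. -/

import Mathlib

open Matrix

attribute [local instance] Matrix.normedAddCommGroup Matrix.normedSpace

open scoped MatrixOrder

namespace NondissipativeAux

variable {n : ℕ}

local notation "Mat" => Matrix (Fin n) (Fin n) ℝ

lemma trace_mul_eq (A B : Mat) : (A * B).trace = ∑ i, ∑ j, A i j * B j i := by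
  simp [Matrix.trace, Matrix.diag, Matrix.mul_apply]

lemma smul_psd {A : Mat} (hA : A.PosSemidef) {c : ℝ} (hc : 0 ≤ c) :
    (c • A).PosSemidef := by
  refine PosSemidef.of_dotProduct_mulVec_nonneg ?_ fun x => ?_
  · unfold Matrix.IsHermitian
    rw [conjTranspose_smul, hA.1]
    simp
  · rw [smul_mulVec, dotProduct_smul, smul_eq_mul]
    exact mul_nonneg hc (hA.dotProduct_mulVec_nonneg x)

lemma psd_vecMulVec (x : Fin n → ℝ) : (vecMulVec x x).PosSemidef := by
  refine PosSemidef.of_dotProduct_mulVec_nonneg ?_ fun y => ?_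
  · ext i j
    simp [vecMulVec_apply, conjTranspose_apply, mul_comm]
  · have h1 : ∀ i, (vecMulVec x x *ᵥ y) i = x i * ∑ j, x j * y j := by
      intro i
      simp [mulVec, vecMulVec_apply, dotProduct, Finset.mul_sum, mul_assoc]
    have h2 : star y ⬝ᵥ (vecMulVec x x) *ᵥ y = (∑ j, x j * y j) * (∑ j, x j * y j) := by
      simp only [dotProduct, h1, Pi.star_apply, star_trivial]
      rw [Finset.sum_mul]
      exact Finset.sum_congr rfl fun i _ => by ring
    rw [h2]
    exact mul_self_nonneg _

lemma trace_vecMulVec (x : Fin n → ℝ) : (vecMulVec x x).trace = ∑ i, x i * x i := by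
  simp [Matrix.trace, Matrix.diag, vecMulVec_apply]

lemma dot_eq_trace (A : Mat) (x : Fin n → ℝ) :
    (A * vecMulVec x x).trace = x ⬝ᵥ A *ᵥ x := by
  rw [trace_mul_eq]
  simp only [vecMulVec_apply, dotProduct, mulVec, Finset.mul_sum]
  exact Finset.sum_congr rfl fun i _ => Finset.sum_congr rfl fun j _ => by ring

/-- A positive semidefinite real matrix with zero trace is zero. -/
lemma psd_trace_eq_zero {A : Mat} (hA : A.PosSemidef) (h : A.trace = 0) : A = 0 := by
  have hnn : ∀ i, 0 ≤ A i i := by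
    intro i
    have := hA.dotProduct_mulVec_nonneg (Pi.single i 1)
    simpa [mulVec_single, single_dotProduct] using this
  have hdiag : ∀ i, A i i = 0 := by
    have := (Finset.sum_eq_zero_iff_of_nonneg (fun i _ => hnn i)).mp h
    exact fun i => this i (Finset.mem_univ i)
  have hcol : ∀ i, A *ᵥ Pi.single i 1 = 0 := by
    intro i
    refine (hA.dotProduct_mulVec_zero_iff (Pi.single i 1)).mp ?_
    simpa [mulVec_single, single_dotProduct] using hdiag i
  ext i j
  have := congrFun (hcol j) i
  simpa [mulVec_single] using this

/-- The square root of a positive definite matrix is positive definite. -/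
lemma sqrt_posDef {A : Mat} (hA : A.PosDef) : (CFC.sqrt A).PosDef := by
  have hQ : (CFC.sqrt A).PosSemidef := (CFC.sqrt_nonneg A).posSemidef
  refine PosDef.of_dotProduct_mulVec_pos hQ.1 fun x hx => ?_
  rcases (hQ.dotProduct_mulVec_nonneg x).lt_or_eq with h | h
  · exact h
  · exfalso
    have h0 : CFC.sqrt A *ᵥ x = 0 :=
      (hQ.dotProduct_mulVec_zero_iff x).mp h.symm
    have hAx : A *ᵥ x = 0 := by
      rw [← CFC.sqrt_mul_sqrt_self A hA.posSemidef.nonneg, ← mulVec_mulVec, h0, mulVec_zero]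
    have := hA.dotProduct_mulVec_pos hx
    rw [hAx, dotProduct_zero] at this
    exact lt_irrefl 0 this

/-- (iii) ⇒ (i) (and also (ii) ⇒ (i) via `PosDef.isUnit`). -/
lemma of_unit (M : Set Mat) (T : Mat) (hT : IsUnit T)
    (h : ∀ F ∈ M, (Tᵀ * F * T).trace = 0) :
    ∀ F ∈ Submodule.span ℝ M, F.PosSemidef → F = 0 := by
  classical
  set ℓ : Mat →ₗ[ℝ] ℝ :=
    { toFun := fun F => (Tᵀ * F * T).trace
      map_add' := fun F G => by
        simp [Matrix.mul_add, Matrix.add_mul, Matrix.trace_add]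
      map_smul' := fun c F => by
        simp [Matrix.mul_smul, Matrix.smul_mul] } with hℓ
  have hker : Submodule.span ℝ M ≤ LinearMap.ker ℓ := by
    rw [Submodule.span_le]
    intro F hF
    simpa [hℓ, LinearMap.mem_ker] using h F hF
  intro F hF hPSD
  have h0 : (Tᵀ * F * T).trace = 0 := by
    have := hker hF
    simpa [hℓ, LinearMap.mem_ker] using this
  have hpsd2 : (Tᵀ * F * T).PosSemidef := by
    have := hPSD.conjTranspose_mul_mul_same T
    rwa [conjTranspose_eq_transpose_of_trivial] at this
  have hF0 : Tᵀ * F * T = 0 := psd_trace_eq_zero hpsd2 h0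
  have hdT : IsUnit T.det := (Matrix.isUnit_iff_isUnit_det T).mp hT
  have hdTt : IsUnit Tᵀ.det := by rwa [Matrix.det_transpose]
  have hcalc : (Tᵀ)⁻¹ * (Tᵀ * F * T) * T⁻¹ = F := by
    rw [Matrix.mul_assoc Tᵀ F T, ← Matrix.mul_assoc (Tᵀ)⁻¹,
      Matrix.nonsing_inv_mul _ hdTt, Matrix.one_mul, Matrix.mul_assoc,
      Matrix.mul_nonsing_inv _ hdT, Matrix.mul_one]
  rw [← hcalc, hF0, Matrix.mul_zero, Matrix.zero_mul]

/-- (i) ⇒ (ii), via hyperplane separation. -/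
lemma key (M : Set Mat) (hsymm : ∀ F ∈ M, F.IsSymm)
    (hi : ∀ F ∈ Submodule.span ℝ M, F.PosSemidef → F = 0) :
    ∃ Q : Mat, Q.PosDef ∧ ∀ F ∈ M, (Qᵀ * F * Q).trace = 0 := by
  classical
  set V : Submodule ℝ Mat := Submodule.span ℝ M with hV
  set C : Set Mat := {X | X.PosSemidef ∧ X.trace = 1} with hC
  -- C is convex
  have hCconv : Convex ℝ C := by
    intro X hX Y hY a b ha hb hab
    refine ⟨(smul_psd hX.1 ha).add (smul_psd hY.1 hb), ?_⟩
    simp [Matrix.trace_add, Matrix.trace_smul, hX.2, hY.2, smul_eq_mul, hab]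
  -- C is closed
  have hCclosed : IsClosed C := by
    have h1 : IsClosed {A : Mat | A.IsHermitian} := by
      have he : {A : Mat | A.IsHermitian} = {A : Mat | Aᴴ = A} := rfl
      rw [he]
      exact isClosed_eq (continuous_id.matrix_conjTranspose) continuous_id
    have h2 : ∀ x : Fin n → ℝ, IsClosed {A : Mat | 0 ≤ star x ⬝ᵥ A *ᵥ x} := fun x =>
      isClosed_le continuous_const
        (continuous_const.dotProduct (continuous_id.matrix_mulVec continuous_const))
    have h3 : IsClosed {A : Mat | A.trace = 1} :=
      isClosed_eq (continuous_id.matrix_trace) continuous_const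
    have hCeq : C = ({A : Mat | A.IsHermitian} ∩ ⋂ x, {A : Mat | 0 ≤ star x ⬝ᵥ A *ᵥ x})
        ∩ {A : Mat | A.trace = 1} := by
      ext A
      simp only [hC, Set.mem_setOf_eq, Set.mem_inter_iff, Set.mem_iInter, Matrix.posSemidef_iff_dotProduct_mulVec]
      try tauto
    rw [hCeq]
    exact (h1.inter (isClosed_iInter h2)).inter h3
  -- entries of elements of C are bounded by 1
  have hCbound : ∀ X ∈ C, ∀ i j, |X i j| ≤ 1 := by
    rintro X ⟨hX, htr⟩ i j
    have hnn : ∀ k, 0 ≤ X k k := by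
      intro k
      have := hX.dotProduct_mulVec_nonneg (Pi.single k 1)
      simpa [mulVec_single, single_dotProduct] using this
    have htr' : ∑ k, X k k = 1 := by
      simpa [Matrix.trace, Matrix.diag] using htr
    have hdle : ∀ k, X k k ≤ 1 := by
      intro k
      rw [← htr']
      exact Finset.single_le_sum (fun l _ => hnn l) (Finset.mem_univ k)
    by_cases hij : i = j
    · subst hij
      rw [abs_le]
      exact ⟨by linarith [hnn i], hdle i⟩
    · have hsym : X j i = X i j := by
        have := congrFun (congrFun hX.1 i) j
        simpa [conjTranspose_apply] using this
      have hpair : X i i + X j j ≤ 1 := by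
        rw [← htr']
        have hsub : ∑ k ∈ ({i, j} : Finset (Fin n)), X k k ≤ ∑ k, X k k :=
          Finset.sum_le_sum_of_subset_of_nonneg (Finset.subset_univ _)
            (fun k _ _ => hnn k)
        rwa [Finset.sum_pair hij] at hsub
      have quad : ∀ c : ℝ, 0 ≤ X i i + 2 * c * X i j + c ^ 2 * X j j := by
        intro c
        have hq := hX.dotProduct_mulVec_nonneg (Pi.single i 1 + Pi.single j c)
        have hstar : (star (Pi.single i 1 + Pi.single j c) : Fin n → ℝ)
            = Pi.single i 1 + Pi.single j c := by
          funext k; simp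
        rw [hstar, mulVec_add, dotProduct_add, add_dotProduct, add_dotProduct] at hq
        simp only [mulVec_single, single_dotProduct, Pi.smul_apply, op_smul_eq_smul, smul_eq_mul,
          col_apply, mul_one, one_mul] at hq
        rw [hsym] at hq
        calc (0:ℝ) ≤ X i i + c * X i j + (X i j * c + c * (X j j * c)) := by linarith [hq]
          _ = X i i + 2 * c * X i j + c ^ 2 * X j j := by ring
      have q1 := quad 1
      have q2 := quad (-1)
      rw [abs_le]
      constructor <;> nlinarith
  -- C is compact
  have hCcompact : IsCompact C := by
    refine (isCompact_closedBall (0 : Mat) 1).of_isClosed_subset hCclosed ?_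
    intro X hX
    rw [Metric.mem_closedBall, dist_zero_right]
    refine (Matrix.norm_le_iff zero_le_one).mpr fun i j => ?_
    rw [Real.norm_eq_abs]
    exact hCbound X hX i j
  -- V is closed and disjoint from C
  have hVclosed : IsClosed (V : Set Mat) := V.closed_of_finiteDimensional
  have hdisj : Disjoint C (V : Set Mat) := by
    rw [Set.disjoint_left]
    rintro X ⟨hX1, hX2⟩ hXV
    have hz := hi X hXV hX1
    rw [hz, Matrix.trace_zero] at hX2
    exact zero_ne_one hX2
  haveI : LocallyConvexSpace ℝ Mat := NormedSpace.toLocallyConvexSpace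
  obtain ⟨f, u, v, hfC, huv, hfV⟩ :=
    geometric_hahn_banach_compact_closed hCconv hCcompact V.convex hVclosed hdisj
  have hf0 : ∀ b ∈ V, f b = 0 := by
    intro b hb
    by_contra hfb
    have h1 := hfV (((v - 1) / f b) • b) (V.smul_mem _ hb)
    rw [_root_.map_smul, smul_eq_mul, div_mul_cancel₀ _ hfb] at h1
    linarith
  have hv0 : v < 0 := by
    have := hfV 0 V.zero_mem
    rwa [map_zero] at this
  have hfneg : ∀ X ∈ C, f X < 0 := fun X hX => (hfC X hX).trans (huv.trans hv0)
  -- the matrix representing -f, then symmetrized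
  set P : Mat := Matrix.of fun i j => -f (Matrix.single i j 1) with hP
  have hrep : ∀ X : Mat, -f X = ∑ i, ∑ j, X i j * P i j := by
    intro X
    conv_lhs => rw [matrix_eq_sum_single X]
    rw [map_sum, ← Finset.sum_neg_distrib]
    refine Finset.sum_congr rfl fun i _ => ?_
    rw [map_sum, ← Finset.sum_neg_distrib]
    refine Finset.sum_congr rfl fun j _ => ?_
    have hsb : Matrix.single i j (X i j) = (X i j) • Matrix.single i j 1 := by
      rw [smul_single]
      norm_num
    rw [hsb, _root_.map_smul, smul_eq_mul, hP]
    simp only [Matrix.of_apply]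
    ring
  have htrP : ∀ X : Mat, (Pᵀ * X).trace = -f X := by
    intro X
    rw [hrep X, trace_mul_eq, Finset.sum_comm]
    refine Finset.sum_congr rfl fun a _ => Finset.sum_congr rfl fun b _ => ?_
    simp only [transpose_apply]
    ring
  set P' : Mat := ((1:ℝ)/2) • (P + Pᵀ) with hP'
  have htrP' : ∀ X : Mat, Xᵀ = X → (P' * X).trace = -f X := by
    intro X hXs
    have h2 : (P * X).trace = (Pᵀ * X).trace := by
      calc (P * X).trace = ((P * X)ᵀ).trace := (Matrix.trace_transpose _).symm
        _ = (Xᵀ * Pᵀ).trace := by rw [Matrix.transpose_mul]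
        _ = (X * Pᵀ).trace := by rw [hXs]
        _ = (Pᵀ * X).trace := Matrix.trace_mul_comm _ _
    rw [hP', Matrix.smul_mul, Matrix.trace_smul, Matrix.add_mul, Matrix.trace_add,
      h2, htrP, smul_eq_mul]
    ring
  have hP'symm : P'ᵀ = P' := by
    rw [hP', transpose_smul, transpose_add, transpose_transpose, add_comm]
  have hP'pd : P'.PosDef := by
    refine PosDef.of_dotProduct_mulVec_pos ?_ fun x hx => ?_
    · show P'ᴴ = P'
      rw [conjTranspose_eq_transpose_of_trivial, hP'symm]
    · obtain ⟨i, hi'⟩ := Function.ne_iff.mp hx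
      have hc : 0 < ∑ k, x k * x k := by
        refine Finset.sum_pos' (fun k _ => mul_self_nonneg _)
          ⟨i, Finset.mem_univ i, mul_self_pos.mpr hi'⟩
      set c : ℝ := ∑ k, x k * x k with hcdef
      have hXC : (c⁻¹ • vecMulVec x x) ∈ C := by
        refine ⟨smul_psd (psd_vecMulVec x) (inv_nonneg.mpr hc.le), ?_⟩
        rw [Matrix.trace_smul, trace_vecMulVec, smul_eq_mul, ← hcdef,
          inv_mul_cancel₀ hc.ne']
      have hfX := hfneg _ hXC
      have hXsym : (c⁻¹ • vecMulVec x x)ᵀ = c⁻¹ • vecMulVec x x := by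
        rw [transpose_smul]
        congr 1
        ext a b
        simp [vecMulVec_apply, mul_comm]
      have htr2 := htrP' _ hXsym
      rw [Matrix.mul_smul, Matrix.trace_smul, smul_eq_mul, dot_eq_trace] at htr2
      have hpos : 0 < c⁻¹ * (x ⬝ᵥ P' *ᵥ x) := by
        rw [htr2]
        linarith
      have hq : 0 < x ⬝ᵥ P' *ᵥ x := by
        by_contra hle
        push_neg at hle
        nlinarith [inv_pos.mpr hc]
      simpa using hq
  -- the square root of P'
  refine ⟨CFC.sqrt P', sqrt_posDef hP'pd, fun F hF => ?_⟩
  have hQsymm : (CFC.sqrt P')ᵀ = CFC.sqrt P' := by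
    rw [← conjTranspose_eq_transpose_of_trivial]
    exact (CFC.sqrt_nonneg P').posSemidef.1
  rw [hQsymm, Matrix.trace_mul_cycle, CFC.sqrt_mul_sqrt_self P' hP'pd.posSemidef.nonneg,
    htrP' F (hsymm F hF)]
  have hz : f F = 0 := hf0 F (Submodule.subset_span hF)
  rw [hz, neg_zero]

end NondissipativeAux

theorem nondissipative_iff_trace_zero {n : ℕ} (M : Set (Matrix (Fin n) (Fin n) ℝ))
    (hM : M.Nonempty) (hsymm : ∀ F ∈ M, F.IsSymm) :
    ((∀ F ∈ Submodule.span ℝ M, F.PosSemidef → F = 0) ↔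
      ∃ Q : Matrix (Fin n) (Fin n) ℝ, Q.PosDef ∧ ∀ F ∈ M, (Qᵀ * F * Q).trace = 0) ∧
    ((∀ F ∈ Submodule.span ℝ M, F.PosSemidef → F = 0) ↔
      ∃ T : Matrix (Fin n) (Fin n) ℝ, IsUnit T ∧ ∀ F ∈ M, (Tᵀ * F * T).trace = 0) := by
  constructor
  · exact ⟨fun hi => NondissipativeAux.key M hsymm hi,
      fun ⟨Q, hQ, h⟩ => NondissipativeAux.of_unit M Q hQ.isUnit h⟩
  · refine ⟨fun hi => ?_, fun ⟨T, hT, h⟩ => NondissipativeAux.of_unit M T hT h⟩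
    obtain ⟨Q, hQ, h⟩ := NondissipativeAux.key M hsymm hi
    exact ⟨Q, hQ.isUnit, h⟩
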